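/- If a_1, …, a_m is a nontrivial cycle of T of length m (i.e., a_i ≠ 1 for all i), then m·log₂(1 + 1/(3·a_min)) > 1 − fract(m·log₂ 3), where fract denotes the fractional part. -/

import Mathlib

/-- The Collatz odd-step map: `T x = (3x+1)/2^{v₂(3x+1)}`. -/
def T (x : ℕ) : ℕ := (3 * x + 1) / 2 ^ (padicValNat 2 (3 * x + 1))

lemma T_mul (x : ℕ) : T x * 2 ^ (padicValNat 2 (3 * x + 1)) = 3 * x + 1 :=
  Nat.div_mul_cancel pow_padicValNat_dvd

lemma T_eq_ordCompl (x : ℕ) : T x = ordCompl[2] (3 * x + 1) := by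
  rw [T, Nat.factorization_def _ Nat.prime_two]

lemma T_pos (x : ℕ) : 0 < T x := by
  rw [T_eq_ordCompl]; exact Nat.ordCompl_pos 2 (by omega)

lemma T_odd (x : ℕ) : Odd (T x) := by
  rw [T_eq_ordCompl, Nat.odd_iff, ← Nat.two_dvd_ne_zero]
  exact Nat.not_dvd_ordCompl Nat.prime_two (by omega)

lemma T_ne_self {x : ℕ} (hx : 1 < x) : T x ≠ x := by
  intro h
  have hmul := T_mul x
  rw [h] at hmul
  have h4 : 4 ≤ 2 ^ (padicValNat 2 (3 * x + 1)) := by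
    rcases Nat.lt_or_ge (2 ^ (padicValNat 2 (3 * x + 1))) 4 with hlt | hge
    · nlinarith
    · exact hge
  nlinarith

theorem stmt_6 (m : ℕ) (hm : 1 ≤ m) (a : ℕ → ℕ)
    (hpos : ∀ i, 1 ≤ i → i ≤ m → 0 < a i)
    (hodd : ∀ i, 1 ≤ i → i ≤ m → Odd (a i))
    (hstep : ∀ i, 1 ≤ i → i < m → a (i + 1) = T (a i))
    (hloop : T (a m) = a 1)
    (hnontriv : ∀ i, 1 ≤ i → i ≤ m → a i ≠ 1)
    (amin : ℕ)
    (hamin : amin = (Finset.Icc 1 m).inf' (Finset.nonempty_Icc.mpr hm) a) :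
    (m : ℝ) * Real.logb 2 (1 + 1 / (3 * (amin : ℝ)))
      > 1 - Int.fract ((m : ℝ) * Real.logb 2 3) := by
  set I := Finset.Icc 1 m with hI
  have hmemI : ∀ i, i ∈ I ↔ 1 ≤ i ∧ i ≤ m := fun i => Finset.mem_Icc
  -- amin facts
  obtain ⟨i0, hi0I, hi0⟩ := Finset.exists_mem_eq_inf' (Finset.nonempty_Icc.mpr hm) a
  rw [← hamin] at hi0
  obtain ⟨hi01, hi0m⟩ := (hmemI i0).mp hi0I
  have hamin_pos : 0 < amin := hi0 ▸ hpos i0 hi01 hi0m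
  have hamin_ne1 : amin ≠ 1 := hi0 ▸ hnontriv i0 hi01 hi0m
  have hamin_gt1 : 1 < amin := by omega
  have hamin_le : ∀ i ∈ I, amin ≤ a i := fun i hi => hamin ▸ Finset.inf'_le a hi
  -- exists a j with amin < a j
  have hex : ∃ j ∈ I, amin < a j := by
    by_contra hc
    push_neg at hc
    have hall : ∀ j ∈ I, a j = amin := fun j hj =>
      le_antisymm (hc j hj) (hamin_le j hj)
    have h1 : a 1 = amin := hall 1 ((hmemI 1).mpr ⟨le_refl 1, hm⟩)
    have hm' : a m = amin := hall m ((hmemI m).mpr ⟨hm, le_refl m⟩)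
    have : T amin = amin := by rw [← hm', hloop, h1]; exact hm'.symm
    exact T_ne_self hamin_gt1 this
  -- v and σ
  set v : ℕ → ℕ := fun i => padicValNat 2 (3 * a i + 1) with hv
  set σ : ℕ → ℕ := fun i => if i = m then 1 else i + 1 with hσ
  have key : ∀ i ∈ I, a (σ i) * 2 ^ v i = 3 * a i + 1 := by
    intro i hi
    obtain ⟨h1, h2⟩ := (hmemI i).mp hi
    by_cases h : i = m
    · subst h
      simp only [hσ, if_pos rfl]
      rw [← hloop]
      exact T_mul _
    · simp only [hσ, if_neg h]
      rw [hstep i h1 (lt_of_le_of_ne h2 h)]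
      exact T_mul _
  -- product shift
  have hshift : ∏ i ∈ I, a (σ i) = ∏ i ∈ I, a i := by
    refine Finset.prod_bij' (fun i _ => σ i) (fun i _ => if i = 1 then m else i - 1)
      ?_ ?_ ?_ ?_ (fun i hi => rfl) <;>
    · intro i hi
      obtain ⟨h1, h2⟩ := (hmemI i).mp hi
      simp only [hσ, hmemI]
      split_ifs <;> omega
  -- the key natural number identity
  set K : ℕ := ∑ i ∈ I, v i with hK
  have hprod : (∏ i ∈ I, a i) * 2 ^ K = ∏ i ∈ I, (3 * a i + 1) := by
    calc (∏ i ∈ I, a i) * 2 ^ K = (∏ i ∈ I, a (σ i)) * ∏ i ∈ I, 2 ^ v i := by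
          rw [hshift, Finset.prod_pow_eq_pow_sum]
      _ = ∏ i ∈ I, (a (σ i) * 2 ^ v i) := (Finset.prod_mul_distrib).symm
      _ = ∏ i ∈ I, (3 * a i + 1) := Finset.prod_congr rfl key
  -- move to reals
  have hapos : ∀ i ∈ I, (0:ℝ) < (a i : ℝ) := by
    intro i hi
    obtain ⟨h1, h2⟩ := (hmemI i).mp hi
    exact_mod_cast hpos i h1 h2
  have hcard : I.card = m := by rw [hI, Nat.card_Icc]; omega
  have hQ : (2:ℝ) ^ K = 3 ^ m * ∏ i ∈ I, (1 + 1 / (3 * (a i : ℝ))) := by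
    have hR : ((∏ i ∈ I, a i : ℕ) : ℝ) * 2 ^ K = ((∏ i ∈ I, (3 * a i + 1) : ℕ) : ℝ) := by
      exact_mod_cast congrArg (fun n : ℕ => (n : ℝ)) hprod
    push_cast at hR
    have hP0 : (∏ i ∈ I, (a i : ℝ)) ≠ 0 :=
      ne_of_gt (Finset.prod_pos hapos)
    have hfac : ∏ i ∈ I, (3 * (a i : ℝ) + 1)
        = (∏ i ∈ I, (a i : ℝ)) * (3 ^ m * ∏ i ∈ I, (1 + 1 / (3 * (a i : ℝ)))) := by
      rw [← hcard, ← Finset.prod_const (3:ℝ), ← Finset.prod_mul_distrib,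
        ← Finset.prod_mul_distrib]
      refine Finset.prod_congr rfl fun i hi => ?_
      have := hapos i hi
      field_simp
    rw [hfac] at hR
    exact mul_left_cancel₀ hP0 hR
  -- logs
  set S : ℝ := ∑ i ∈ I, Real.logb 2 (1 + 1 / (3 * (a i : ℝ))) with hS
  have hterm_pos : ∀ i ∈ I, (1:ℝ) < 1 + 1 / (3 * (a i : ℝ)) := by
    intro i hi
    have := hapos i hi
    have : (0:ℝ) < 1 / (3 * (a i : ℝ)) := by positivity
    linarith
  have hlog2pos : (0:ℝ) < Real.log 2 := Real.log_pos one_lt_two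
  have hKeq : (K : ℝ) = (m : ℝ) * Real.logb 2 3 + S := by
    have hlogQ : Real.log ((2:ℝ) ^ K)
        = Real.log ((3:ℝ) ^ m) + ∑ i ∈ I, Real.log (1 + 1 / (3 * (a i : ℝ))) := by
      rw [hQ, Real.log_mul (by positivity) (ne_of_gt (Finset.prod_pos
        (fun i hi => lt_trans one_pos (hterm_pos i hi)))),
        Real.log_prod (fun i hi => ne_of_gt (lt_trans one_pos (hterm_pos i hi)))]
    rw [Real.log_pow, Real.log_pow] at hlogQ
    have hSl : S * Real.log 2 = ∑ i ∈ I, Real.log (1 + 1 / (3 * (a i : ℝ))) := by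
      rw [hS, Finset.sum_mul]
      exact Finset.sum_congr rfl fun i _ => div_mul_cancel₀ _ (ne_of_gt hlog2pos)
    have hmain : (K:ℝ) * Real.log 2 = ((m : ℝ) * Real.logb 2 3 + S) * Real.log 2 := by
      rw [add_mul, hSl, Real.logb,
        show (m:ℝ) * (Real.log 3 / Real.log 2) * Real.log 2 = (m:ℝ) * Real.log 3 from by
          field_simp]
      exact hlogQ
    exact mul_right_cancel₀ (ne_of_gt hlog2pos) hmain
  -- S bounds
  have hSpos : 0 < S := by
    refine Finset.sum_pos (fun i hi => Real.logb_pos one_lt_two (hterm_pos i hi)) ?_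
    exact ⟨i0, hi0I⟩
  have hterm_le : ∀ i ∈ I, Real.logb 2 (1 + 1 / (3 * (a i : ℝ)))
      ≤ Real.logb 2 (1 + 1 / (3 * (amin : ℝ))) := by
    intro i hi
    refine Real.logb_le_logb_of_le one_lt_two (lt_trans one_pos (hterm_pos i hi)) ?_
    have h1 : (0:ℝ) < (amin : ℝ) := by exact_mod_cast hamin_pos
    have h2 : (amin : ℝ) ≤ (a i : ℝ) := by exact_mod_cast hamin_le i hi
    have := hapos i hi
    gcongr
  have hSlt : S < (m : ℝ) * Real.logb 2 (1 + 1 / (3 * (amin : ℝ))) := by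
    obtain ⟨j, hjI, hjlt⟩ := hex
    have : S < ∑ _i ∈ I, Real.logb 2 (1 + 1 / (3 * (amin : ℝ))) := by
      refine Finset.sum_lt_sum hterm_le ⟨j, hjI, ?_⟩
      have h1 : (0:ℝ) < (amin : ℝ) := by exact_mod_cast hamin_pos
      have h2 : (amin : ℝ) < (a j : ℝ) := by exact_mod_cast hjlt
      refine Real.logb_lt_logb one_lt_two (lt_trans one_pos (hterm_pos j hjI)) ?_
      gcongr
    rwa [Finset.sum_const, hcard, nsmul_eq_mul] at this
  -- final chain
  set x : ℝ := (m : ℝ) * Real.logb 2 3 with hx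
  have hKgt : x < (K : ℝ) := by rw [hKeq]; linarith
  have hfloor : (⌊x⌋ : ℝ) + 1 ≤ (K : ℝ) := by
    have h1 : (⌊x⌋ : ℝ) ≤ x := Int.floor_le x
    have h2 : ⌊x⌋ < (K : ℤ) := by exact_mod_cast lt_of_le_of_lt h1 hKgt
    exact_mod_cast h2
  have hfract : Int.fract x = x - ⌊x⌋ := (Int.self_sub_floor x).symm
  rw [gt_iff_lt, hfract]
  rw [hKeq] at hfloor
  linarith
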